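/- Suppose Im A ⊆ D₀(g(A)) and A has a bounded inverse on its range, i.e. there exists c > 0 with ‖Ax‖ ≥ c‖x‖ for all x ∈ D(A). Then g(A) is bounded on Im A: there exists C > 0 such that ‖g(A)y‖ ≤ C‖y‖ for all y ∈ Im A. -/

import Mathlib

open MeasureTheory Filter Topology Set

noncomputable section

/-- `IsGen T x y` means `x` lies in the domain `D(A)` of the generator `A` of the
`C₀`-semigroup `T` and `A x = y`. -/
def IsGen {X : Type*} [NormedAddCommGroup X] [NormedSpace ℂ X]
    (T : ℝ → X →L[ℂ] X) (x y : X) : Prop :=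
  Tendsto (fun t : ℝ => t⁻¹ • (T t x - x)) (𝓝[>] (0 : ℝ)) (𝓝 y)

section Aux

variable {X : Type*} [NormedAddCommGroup X] [NormedSpace ℂ X] [CompleteSpace X]
  {T : ℝ → X →L[ℂ] X}

theorem IsGen.zero (T : ℝ → X →L[ℂ] X) : IsGen T 0 0 := by
  have : (fun t : ℝ => t⁻¹ • (T t 0 - 0)) = fun _ => (0 : X) := by
    funext t; simp
  rw [IsGen, this]
  exact tendsto_const_nhds

theorem IsGen.add {x y x' y' : X} (h : IsGen T x y) (h' : IsGen T x' y') :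
    IsGen T (x + x') (y + y') := by
  refine (Filter.Tendsto.add h h').congr (fun t => ?_)
  simp only [map_add, add_sub_add_comm, smul_add]

theorem IsGen.smul {x y : X} (c : ℂ) (h : IsGen T x y) :
    IsGen T (c • x) (c • y) := by
  refine (Filter.Tendsto.const_smul h c).congr (fun t => ?_)
  simp only [_root_.map_smul, ← smul_sub]
  rw [smul_comm]

/-- interval-integrability of orbits -/
theorem orbit_intervalIntegrable (hTcont : ∀ x : X, ContinuousOn (fun t => T t x) (Ici (0 : ℝ)))
    (y : X) {t : ℝ} (ht : 0 ≤ t) :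
    IntervalIntegrable (fun s => T s y) MeasureTheory.volume 0 t := by
  apply ContinuousOn.intervalIntegrable
  rw [uIcc_of_le ht]
  exact (hTcont y).mono (Icc_subset_Ici_self)

/-- Right-derivative of the orbit map. -/
theorem orbit_hasDerivWithinAt
    (hTadd : ∀ s t : ℝ, 0 ≤ s → 0 ≤ t → T (s + t) = (T s).comp (T t))
    {x y : X} (hxy : IsGen T x y) {t : ℝ} (ht : 0 ≤ t) :
    HasDerivWithinAt (fun u => T u x) (T t y) (Ici t) t := by
  rw [hasDerivWithinAt_iff_tendsto_slope, Ici_sdiff_left]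
  have h1 : Tendsto (fun u : ℝ => u - t) (𝓝[>] t) (𝓝[>] (0 : ℝ)) := by
    rw [tendsto_nhdsWithin_iff]
    constructor
    · have h0 : Tendsto (fun u : ℝ => u - t) (𝓝 t) (𝓝 0) := by
        simpa using Filter.Tendsto.sub_const (tendsto_id (x := 𝓝 t)) t
      exact h0.mono_left nhdsWithin_le_nhds
    · exact eventually_nhdsWithin_of_forall (fun u hu => by
        simp only [mem_Ioi] at hu ⊢; linarith)
  have h2 : Tendsto (fun u : ℝ => T t ((u - t)⁻¹ • (T (u - t) x - x))) (𝓝[>] t)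
      (𝓝 (T t y)) := ((T t).continuous.tendsto y).comp (hxy.comp h1)
  refine h2.congr' ?_
  filter_upwards [self_mem_nhdsWithin] with u hu
  have hut : (0:ℝ) ≤ u - t := by simp only [mem_Ioi] at hu; linarith
  have hTu : T u x = T t (T (u - t) x) := by
    have := hTadd t (u - t) ht hut
    rw [show t + (u - t) = u by ring] at this
    rw [this]; rfl
  rw [slope_def_module]
  rw [(T t).map_smul_of_tower, map_sub, ← hTu]

/-- Right-derivative of the primitive of the orbit. -/
theorem primitive_hasDerivWithinAt
    (hTcont : ∀ x : X, ContinuousOn (fun t => T t x) (Ici (0 : ℝ)))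
    (y : X) {t : ℝ} (ht : 0 ≤ t) :
    HasDerivWithinAt (fun u => ∫ s in (0:ℝ)..u, T s y) (T t y) (Ici t) t := by
  refine intervalIntegral.integral_hasDerivWithinAt_right (s := Ici t) (t := Ioi t)
    (orbit_intervalIntegrable hTcont y ht) ⟨Ioi t, self_mem_nhdsWithin, ?_⟩ ?_
  · exact (((hTcont y).mono (Ici_subset_Ici.2 ht)).mono Ioi_subset_Ici_self).aestronglyMeasurable
      measurableSet_Ioi
  · exact (((hTcont y) t (mem_Ici.2 ht)).mono (Ici_subset_Ici.2 ht)).mono Ioi_subset_Ici_self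

/-- Integral representation of the semigroup on the domain of the generator. -/
theorem isGen_integral_eq
    (hTadd : ∀ s t : ℝ, 0 ≤ s → 0 ≤ t → T (s + t) = (T s).comp (T t))
    (hTcont : ∀ x : X, ContinuousOn (fun t => T t x) (Ici (0 : ℝ)))
    {x y : X} (hxy : IsGen T x y) {b : ℝ} (hb : 0 ≤ b) :
    T b x - x = ∫ s in (0:ℝ)..b, T s y := by
  have h0 : T 0 x = x := by
    have h := hxy
    -- derive `T 0 x = x` from continuity at 0 and existence of the limit?
    -- Instead: continuity of orbit at 0 and IsGen implies T t x - x → 0,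
    -- combined with orbit continuity T t x → T 0 x.
    have h1 : Tendsto (fun t : ℝ => T t x - x) (𝓝[>] (0:ℝ)) (𝓝 (0 : X)) := by
      have h2 : Tendsto (fun t : ℝ => t • (t⁻¹ • (T t x - x))) (𝓝[>] (0:ℝ)) (𝓝 ((0:ℝ) • y)) := by
        exact (tendsto_id.mono_left nhdsWithin_le_nhds).smul hxy
      rw [zero_smul] at h2
      refine h2.congr' ?_
      filter_upwards [self_mem_nhdsWithin] with t ht
      rw [smul_inv_smul₀ (ne_of_gt ht)]
    have h3 : Tendsto (fun t : ℝ => T t x - x) (𝓝[>] (0:ℝ)) (𝓝 (T 0 x - x)) := by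
      have := ((hTcont x) 0 (mem_Ici.2 le_rfl)).sub (continuousWithinAt_const (b := x))
      exact this.tendsto.mono_left (nhdsWithin_mono _ Ioi_subset_Ici_self)
    have := tendsto_nhds_unique h3 h1
    · have hne : (𝓝[>] (0:ℝ)).NeBot := nhdsGT_neBot 0
      rw [sub_eq_zero] at this
      exact this
  set f : ℝ → X := fun u => T u x - ∫ s in (0:ℝ)..u, T s y with hf
  have key : ∀ u ∈ Icc (0:ℝ) b, f u = f 0 := by
    apply constant_of_has_deriv_right_zero
    · apply ContinuousOn.sub
      · exact fun u hu => ((hTcont x) u hu.1).mono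
          (fun v hv => hv.1)
      · have := intervalIntegral.continuousOn_primitive_interval'
          (orbit_intervalIntegrable hTcont y hb) left_mem_uIcc
        rwa [uIcc_of_le hb] at this
    · intro u hu
      have := (orbit_hasDerivWithinAt hTadd hxy hu.1).sub
        (primitive_hasDerivWithinAt hTcont y hu.1)
      simp only [sub_self] at this
      exact this
  have hb' := key b ⟨hb, le_rfl⟩
  simp only [hf, intervalIntegral.integral_same, sub_zero, h0] at hb'
  rw [sub_eq_iff_eq_add] at hb'
  rw [hb']
  abel


theorem isGen_of_integral (hT0 : T 0 = ContinuousLinearMap.id ℂ X)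
    (hTcont : ∀ x : X, ContinuousOn (fun t => T t x) (Ici (0 : ℝ)))
    {x y : X} (H : ∀ b : ℝ, 0 ≤ b → T b x - x = ∫ s in (0:ℝ)..b, T s y) :
    IsGen T x y := by
  have hd := primitive_hasDerivWithinAt (T := T) hTcont y (t := 0) le_rfl
  rw [hasDerivWithinAt_iff_tendsto_slope, Ici_sdiff_left, hT0] at hd
  simp only [ContinuousLinearMap.id_apply] at hd
  refine hd.congr' ?_
  filter_upwards [self_mem_nhdsWithin] with t ht
  rw [slope_def_module]
  simp only [intervalIntegral.integral_same, sub_zero]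
  rw [← H t (le_of_lt ht)]

theorem isClosed_isGen (hT0 : T 0 = ContinuousLinearMap.id ℂ X)
    (hTadd : ∀ s t : ℝ, 0 ≤ s → 0 ≤ t → T (s + t) = (T s).comp (T t))
    (hTcont : ∀ x : X, ContinuousOn (fun t => T t x) (Ici (0 : ℝ)))
    (hTbdd : ∃ M : ℝ, ∀ t : ℝ, 0 ≤ t → ‖T t‖ ≤ M) :
    IsClosed {p : X × X | IsGen T p.1 p.2} := by
  obtain ⟨M, hM⟩ := hTbdd
  have hset : {p : X × X | IsGen T p.1 p.2} =
      ⋂ b ∈ Ici (0:ℝ), {p : X × X | T b p.1 - p.1 = ∫ s in (0:ℝ)..b, T s p.2} := by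
    ext p
    simp only [mem_setOf_eq, mem_iInter]
    constructor
    · intro hp b hb
      exact isGen_integral_eq hTadd hTcont hp hb
    · intro hp
      exact isGen_of_integral hT0 hTcont (fun b hb => hp b hb)
  rw [hset]
  refine isClosed_biInter (fun b hb => isClosed_eq ?_ ?_)
  · exact ((T b).continuous.comp continuous_fst).sub continuous_fst
  · rw [mem_Ici] at hb
    have hint : ∀ v : X, IntervalIntegrable (fun s => T s v) MeasureTheory.volume 0 b :=
      fun v => orbit_intervalIntegrable hTcont v hb
    have hlip : LipschitzWith (Real.toNNReal (M * b)) (fun z : X => ∫ s in (0:ℝ)..b, T s z) := by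
      refine LipschitzWith.of_dist_le_mul (fun z w => ?_)
      rw [dist_eq_norm, dist_eq_norm, ← intervalIntegral.integral_sub (hint z) (hint w)]
      have hbd : ∀ s ∈ Set.uIoc (0:ℝ) b, ‖T s z - T s w‖ ≤ M * ‖z - w‖ := by
        intro s hs
        rw [uIoc_of_le hb] at hs
        rw [← map_sub]
        calc ‖T s (z - w)‖ ≤ ‖T s‖ * ‖z - w‖ := (T s).le_opNorm _
          _ ≤ M * ‖z - w‖ := mul_le_mul_of_nonneg_right (hM s (le_of_lt hs.1)) (norm_nonneg _)
      have h2 := intervalIntegral.norm_integral_le_of_norm_le_const hbd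
      have hMb : (0:ℝ) ≤ M * b := by
        have hM0 : 0 ≤ M := le_trans (norm_nonneg (T 0)) (hM 0 le_rfl)
        positivity
      calc ‖∫ s in (0:ℝ)..b, (T s z - T s w)‖ ≤ M * ‖z - w‖ * |b - 0| := h2
        _ = (M * b) * ‖z - w‖ := by rw [sub_zero, abs_of_nonneg hb]; ring
        _ = (Real.toNNReal (M * b) : ℝ) * ‖z - w‖ := by rw [Real.coe_toNNReal _ hMb]
    exact hlip.continuous.comp continuous_snd

end Aux

/-- With the complex measure `a` encoded as `da = h dμ` (`μ = |a|`,
`‖h t‖ = 1`) and `g(A)x = ∫_{[0,∞)} h t • T t x ∂μ` with domain `D₀(g(A))`: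
if `Im A ⊆ D₀(g(A))` and `A` has a bounded inverse on its range
(`‖Ax‖ ≥ c‖x‖` on `D(A)` for some `c > 0`), then `g(A)` is bounded on `Im A`:
there is `C > 0` with `‖g(A)y‖ ≤ C‖y‖` for all `y ∈ Im A`. -/
theorem stmt6 {X : Type*} [NormedAddCommGroup X] [NormedSpace ℂ X] [CompleteSpace X]
    (T : ℝ → X →L[ℂ] X)
    (hT0 : T 0 = ContinuousLinearMap.id ℂ X)
    (hTadd : ∀ s t : ℝ, 0 ≤ s → 0 ≤ t → T (s + t) = (T s).comp (T t))
    (hTcont : ∀ x : X, ContinuousOn (fun t => T t x) (Ici (0 : ℝ)))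
    (hTbdd : ∃ M : ℝ, ∀ t : ℝ, 0 ≤ t → ‖T t‖ ≤ M)
    (μ : Measure ℝ) [SigmaFinite μ] [IsLocallyFiniteMeasure μ]
    (h : ℝ → ℂ) (hmeas : Measurable h) (hnorm : ∀ t, ‖h t‖ = 1)
    (hRange : ∀ x y : X, IsGen T x y → IntegrableOn (fun t => h t • T t y) (Ici (0 : ℝ)) μ)
    (hinv : ∃ c > (0 : ℝ), ∀ x y : X, IsGen T x y → c * ‖x‖ ≤ ‖y‖) :
    ∃ C > (0 : ℝ), ∀ x y : X, IsGen T x y →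
      ‖∫ t in Ici (0 : ℝ), h t • T t y ∂μ‖ ≤ C * ‖y‖ := by
  classical
  obtain ⟨M, hM⟩ := hTbdd
  have hM0 : 0 ≤ M := le_trans (norm_nonneg (T 0)) (hM 0 le_rfl)
  obtain ⟨c, hc, hcineq⟩ := hinv
  -- the graph of the generator as a closed submodule of `X × X`
  set G : Submodule ℂ (X × X) :=
    { carrier := {p : X × X | IsGen T p.1 p.2}
      add_mem' := fun hp hq => hp.add hq
      zero_mem' := IsGen.zero T
      smul_mem' := fun cc p hp => hp.smul cc } with hG
  have hGclosed : IsClosed (G : Set (X × X)) :=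
    isClosed_isGen hT0 hTadd hTcont ⟨M, hM⟩
  haveI : CompleteSpace G := hGclosed.completeSpace_coe
  -- integrability of the integrand for elements of G
  have hIG : ∀ p : G, IntegrableOn (fun t => h t • T t (p : X × X).2) (Ici (0:ℝ)) μ :=
    fun p => hRange (p : X × X).1 (p : X × X).2 p.2
  -- truncated operators
  have hIcc : ∀ (n : ℕ) (p : G),
      IntegrableOn (fun t => h t • T t (p : X × X).2) (Icc (0:ℝ) n) μ :=
    fun n p => (hIG p).mono_set Icc_subset_Ici_self
  set Φ : ℕ → G →L[ℂ] X := fun n =>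
    LinearMap.mkContinuous
      { toFun := fun p => ∫ t in Icc (0:ℝ) (n:ℝ), h t • T t (p : X × X).2 ∂μ
        map_add' := by
          intro p q
          have heq : (fun t => h t • T t ((p : X × X).2 + (q : X × X).2)) =
              fun t => h t • T t (p : X × X).2 + h t • T t (q : X × X).2 := by
            funext t; rw [map_add, smul_add]
          simp only [Submodule.coe_add, Prod.snd_add]
          rw [heq, integral_add (hIcc n p) (hIcc n q)]
        map_smul' := by
          intro cc p
          have heq : (fun t => h t • T t (cc • (p : X × X).2)) =
              fun t => cc • (h t • T t (p : X × X).2) := by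
            funext t; rw [_root_.map_smul, smul_comm]
          simp only [Submodule.coe_smul, Prod.smul_snd, RingHom.id_apply]
          rw [heq, integral_smul]
        }
      (M * (μ (Icc (0:ℝ) (n:ℝ))).toReal)
      (by
        intro p
        simp only [LinearMap.coe_mk, AddHom.coe_mk]
        have hfin : μ (Icc (0:ℝ) (n:ℝ)) < ⊤ := isCompact_Icc.measure_lt_top
        have hb : ∀ t ∈ Icc (0:ℝ) (n:ℝ), ‖h t • T t (p : X × X).2‖ ≤ M * ‖(p : X × X).2‖ := by
          intro t ht
          rw [norm_smul, hnorm t, one_mul]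
          calc ‖T t (p : X × X).2‖ ≤ ‖T t‖ * ‖(p : X × X).2‖ := (T t).le_opNorm _
            _ ≤ M * ‖(p : X × X).2‖ :=
              mul_le_mul_of_nonneg_right (hM t ht.1) (norm_nonneg _)
        have := norm_setIntegral_le_of_norm_le_const hfin hb
        calc ‖∫ t in Icc (0:ℝ) (n:ℝ), h t • T t (p : X × X).2 ∂μ‖
            ≤ M * ‖(p : X × X).2‖ * (μ (Icc (0:ℝ) (n:ℝ))).toReal := this
          _ = M * (μ (Icc (0:ℝ) (n:ℝ))).toReal * ‖(p : X × X).2‖ := by ring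
          _ ≤ M * (μ (Icc (0:ℝ) (n:ℝ))).toReal * ‖p‖ := by
              refine mul_le_mul_of_nonneg_left ?_ (by positivity)
              exact norm_snd_le (p : X × X))
  -- pointwise convergence of the truncated operators
  have hunion : (⋃ n : ℕ, Icc (0:ℝ) (n:ℝ)) = Ici (0:ℝ) := by
    ext t
    simp only [mem_iUnion, mem_Icc, mem_Ici]
    constructor
    · rintro ⟨n, hn, -⟩; exact hn
    · intro ht
      obtain ⟨n, hn⟩ := exists_nat_ge t
      exact ⟨n, ht, hn⟩
  have htends : Tendsto (fun n (p : G) => Φ n p) atTop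
      (𝓝 (fun p : G => ∫ t in Ici (0:ℝ), h t • T t (p : X × X).2 ∂μ)) := by
    rw [tendsto_pi_nhds]
    intro p
    have := tendsto_setIntegral_of_monotone (μ := μ)
      (s := fun n : ℕ => Icc (0:ℝ) (n:ℝ)) (f := fun t => h t • T t (p : X × X).2)
      (fun n => measurableSet_Icc)
      (fun n m hnm => Icc_subset_Icc le_rfl (by exact_mod_cast hnm))
      (by rw [hunion]; exact hIG p)
    rw [hunion] at this
    exact this
  -- the limit operator, continuous by Banach–Steinhaus
  set Ψ : G →L[ℂ] X := continuousLinearMapOfTendsto Φ htends with hPsi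
  have hPsiapply : ∀ p : G, Ψ p = ∫ t in Ici (0:ℝ), h t • T t (p : X × X).2 ∂μ :=
    fun p => rfl
  refine ⟨(‖Ψ‖ + 1) * max c⁻¹ 1, by positivity, ?_⟩
  intro x y hxy
  set p : G := ⟨(x, y), hxy⟩ with hp
  have h1 : ‖∫ t in Ici (0:ℝ), h t • T t y ∂μ‖ = ‖Ψ p‖ := by rw [hPsiapply]
  have h2 : ‖Ψ p‖ ≤ ‖Ψ‖ * ‖p‖ := Ψ.le_opNorm p
  have hnp : ‖p‖ ≤ max c⁻¹ 1 * ‖y‖ := by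
    have hpn : ‖p‖ = max ‖x‖ ‖y‖ := rfl
    rw [hpn]
    refine max_le ?_ ?_
    · have hx : ‖x‖ ≤ c⁻¹ * ‖y‖ := by
        rw [inv_mul_eq_div, le_div_iff₀ hc, mul_comm]
        exact hcineq x y hxy
      exact hx.trans (mul_le_mul_of_nonneg_right (le_max_left _ _) (norm_nonneg _))
    · calc ‖y‖ = 1 * ‖y‖ := (one_mul _).symm
        _ ≤ max c⁻¹ 1 * ‖y‖ :=
          mul_le_mul_of_nonneg_right (le_max_right _ _) (norm_nonneg _)
  rw [h1]
  calc ‖Ψ p‖ ≤ ‖Ψ‖ * ‖p‖ := h2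
    _ ≤ (‖Ψ‖ + 1) * (max c⁻¹ 1 * ‖y‖) := by
        refine mul_le_mul (by linarith [norm_nonneg Ψ]) hnp (norm_nonneg _) (by positivity)
    _ = (‖Ψ‖ + 1) * max c⁻¹ 1 * ‖y‖ := by ring
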